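/- Let G be a countable group, V ⊆ G, and p ∈ ℕ. Suppose that for every unitary representation π of G and vector ξ with ∑_{v∈V} |⟨π(v)ξ, ξ⟩| < ∞, ξ is orthogonal to all π(G)-invariant vectors. Then for every unitary representation π of G and vector ξ with ∑_{v∈V} |⟨π(v)ξ, ξ⟩|^p < ∞, ξ is orthogonal to all π(G)-invariant vectors. -/

import Mathlib

open scoped ComplexOrder

noncomputable section

lemma gram_psd {n : Type*} [Fintype n] {H : Type*} [NormedAddCommGroup H]
    [InnerProductSpace ℂ H] (w : n → H) :
    (Matrix.of fun i j => (inner ℂ (w i) (w j) : ℂ)).PosSemidef := by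
  rw [Matrix.posSemidef_iff_dotProduct_mulVec]
  constructor
  · ext i j
    simp [Matrix.conjTranspose_apply, inner_conj_symm]
  · intro x
    have h : dotProduct (star x) ((Matrix.of fun i j => (inner ℂ (w i) (w j) : ℂ)).mulVec x)
        = (inner ℂ (∑ i, x i • w i) (∑ j, x j • w j) : ℂ) := by
      simp [dotProduct, Matrix.mulVec, inner_sum, sum_inner, inner_smul_left,
        inner_smul_right, Finset.mul_sum, mul_assoc, -inner_self_eq_norm_sq_to_K]
      rw [Finset.sum_comm]
      exact Finset.sum_congr rfl fun i _ => Finset.sum_congr rfl fun j _ => by ring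
    rw [h, @inner_self_eq_norm_sq_to_K ℂ]
    positivity

lemma hadamard_psd {n : Type*} [Fintype n] {A B : Matrix n n ℂ}
    (hA : A.PosSemidef) (hB : B.PosSemidef) :
    (Matrix.of fun i j => A i j * B i j).PosSemidef := by
  exact Matrix.PosSemidef.hadamard hA hB

lemma hadpow_psd {n : Type*} [Fintype n] {A : Matrix n n ℂ} (hA : A.PosSemidef) :
    ∀ p : ℕ, 0 < p → (Matrix.of fun i j => (A i j) ^ p).PosSemidef := by
  intro p
  induction p with
  | zero => intro h; exact absurd h (lt_irrefl 0)
  | succ q ih =>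
    intro _
    rcases Nat.eq_zero_or_pos q with hq | hq
    · subst hq
      simpa [pow_succ] using (show (Matrix.of fun i j => A i j).PosSemidef from hA)
    · simp_rw [pow_succ]
      exact hadamard_psd (ih hq) hA

section Kernel

variable {ι : Type*} (K : ι → ι → ℂ)

/-- formal inner product defined by the kernel `K` -/
def kInner (f g : ι →₀ ℂ) : ℂ :=
  ∑ x ∈ f.support, ∑ y ∈ g.support, (starRingEnd ℂ) (f x) * g y * K x y

lemma kInner_eq (f g : ι →₀ ℂ) (s t : Finset ι) (hf : f.support ⊆ s) (hg : g.support ⊆ t) :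
    kInner K f g = ∑ x ∈ s, ∑ y ∈ t, (starRingEnd ℂ) (f x) * g y * K x y := by
  unfold kInner
  have h1 : ∀ x : ι, ∑ y ∈ g.support, (starRingEnd ℂ) (f x) * g y * K x y
      = ∑ y ∈ t, (starRingEnd ℂ) (f x) * g y * K x y := by
    intro x
    refine Finset.sum_subset hg fun y _ hy => ?_
    simp [Finsupp.notMem_support_iff.mp hy]
  simp_rw [h1]
  refine Finset.sum_subset hf fun x _ hx => ?_
  simp [Finsupp.notMem_support_iff.mp hx]

open scoped ComplexOrder in
/-- A pre-inner-product space structure on finitely supported functions from a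
positive semidefinite hermitian kernel. -/
def kCore (hsymm : ∀ x y, (starRingEnd ℂ) (K x y) = K y x)
    (hpos : ∀ (s : Finset ι) (v : ι → ℂ),
      0 ≤ ∑ x ∈ s, ∑ y ∈ s, (starRingEnd ℂ) (v x) * v y * K x y) :
    PreInnerProductSpace.Core ℂ (ι →₀ ℂ) where
  inner := kInner K
  conj_inner_symm g f := by
    show (starRingEnd ℂ) (kInner K f g) = kInner K g f
    unfold kInner
    rw [map_sum]
    simp_rw [map_sum, map_mul, Complex.conj_conj, hsymm]
    rw [Finset.sum_comm]
    exact Finset.sum_congr rfl fun x _ => Finset.sum_congr rfl fun y _ => by ring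
  re_inner_nonneg f := by
    have h := hpos f.support f
    have := Complex.le_def.mp h
    simpa [kInner] using this.1
  add_left f1 f2 g := by
    show kInner K (f1 + f2) g = kInner K f1 g + kInner K f2 g
    classical
    set s : Finset ι := f1.support ∪ f2.support ∪ (f1 + f2).support with hs
    rw [kInner_eq K (f1 + f2) g s g.support (by intro a ha; simp only [hs, Finset.mem_union]; tauto) le_rfl,
      kInner_eq K f1 g s g.support (by intro a ha; simp only [hs, Finset.mem_union]; tauto) le_rfl,
      kInner_eq K f2 g s g.support (by intro a ha; simp only [hs, Finset.mem_union]; tauto) le_rfl,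
      ← Finset.sum_add_distrib]
    refine Finset.sum_congr rfl fun x _ => ?_
    rw [← Finset.sum_add_distrib]
    refine Finset.sum_congr rfl fun y _ => ?_
    simp only [Finsupp.add_apply, map_add]
    ring
  smul_left f g r := by
    show kInner K (r • f) g = (starRingEnd ℂ) r * kInner K f g
    classical
    set s : Finset ι := f.support ∪ (r • f).support with hs
    rw [kInner_eq K (r • f) g s g.support (by intro a ha; simp only [hs, Finset.mem_union]; tauto) le_rfl,
      kInner_eq K f g s g.support (by intro a ha; simp only [hs, Finset.mem_union]; tauto) le_rfl, Finset.mul_sum]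
    refine Finset.sum_congr rfl fun x _ => ?_
    rw [Finset.mul_sum]
    refine Finset.sum_congr rfl fun y _ => ?_
    simp only [Finsupp.smul_apply, smul_eq_mul, map_mul]
    ring

lemma kInner_single (x y : ι) :
    kInner K (Finsupp.single x (1 : ℂ)) (Finsupp.single y (1 : ℂ)) = K x y := by
  unfold kInner
  rw [Finsupp.support_single_ne_zero _ one_ne_zero,
    Finsupp.support_single_ne_zero _ one_ne_zero, Finset.sum_singleton,
    Finset.sum_singleton, Finsupp.single_eq_same, Finsupp.single_eq_same]
  simp

lemma kInner_equivMapDomain (e : ι ≃ ι) (hK : ∀ x y, K (e x) (e y) = K x y)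
    (f g : ι →₀ ℂ) :
    kInner K (Finsupp.equivMapDomain e f) (Finsupp.equivMapDomain e g) = kInner K f g := by
  unfold kInner
  rw [show (Finsupp.equivMapDomain e f).support = f.support.map e.toEmbedding from rfl,
    show (Finsupp.equivMapDomain e g).support = g.support.map e.toEmbedding from rfl,
    Finset.sum_map]
  refine Finset.sum_congr rfl fun x _ => ?_
  rw [Finset.sum_map]
  refine Finset.sum_congr rfl fun y _ => ?_
  simp [Finsupp.equivMapDomain_apply, Equiv.symm_apply_apply, hK]

end Kernel

section Main

variable {G : Type} [Group G] {H : Type} [NormedAddCommGroup H] [InnerProductSpace ℂ H]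
variable (π : G →* (H ≃ₗᵢ[ℂ] H)) (ξ η : H) (p : ℕ)

/-- the vectors indexed by `Option G` -/
def wv : Option G → H := fun x => Option.elim x η fun g => (π g) ξ

/-- the kernel -/
def Kk : Option G → Option G → ℂ := fun x y => (inner ℂ (wv π ξ η x) (wv π ξ η y) : ℂ) ^ p

lemma Kk_symm : ∀ x y, (starRingEnd ℂ) (Kk π ξ η p x y) = Kk π ξ η p y x := fun x y => by
  simp only [Kk, map_pow, inner_conj_symm]

open scoped ComplexOrder in
lemma Kk_pos (hp : 0 < p) : ∀ (s : Finset (Option G)) (v : Option G → ℂ),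
    0 ≤ ∑ x ∈ s, ∑ y ∈ s, (starRingEnd ℂ) (v x) * v y * Kk π ξ η p x y := by
  intro s v
  have hpsd := hadpow_psd (gram_psd (fun i : s => wv π ξ η (i : Option G))) p hp
  have h2 := hpsd.dotProduct_mulVec_nonneg (fun i : s => v (i : Option G))
  have h3 : dotProduct (star fun i : s => v (i : Option G))
      ((Matrix.of fun i j : s =>
          ((inner ℂ (wv π ξ η (i : Option G)) (wv π ξ η (j : Option G)) : ℂ)) ^ p).mulVec
        fun i : s => v (i : Option G))
      = ∑ x ∈ s, ∑ y ∈ s, (starRingEnd ℂ) (v x) * v y * Kk π ξ η p x y := by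
    rw [← Finset.sum_coe_sort s (fun x => ∑ y ∈ s, (starRingEnd ℂ) (v x) * v y * Kk π ξ η p x y)]
    simp only [dotProduct, Matrix.mulVec, Matrix.of_apply, Pi.star_apply,
      dotProduct]
    refine Finset.sum_congr rfl fun i _ => ?_
    rw [← Finset.sum_coe_sort s (fun y => (starRingEnd ℂ) (v i) * v y * Kk π ξ η p i y),
      Finset.mul_sum]
    refine Finset.sum_congr rfl fun j _ => ?_
    show starRingEnd ℂ (v i) * ((inner ℂ (wv π ξ η i) (wv π ξ η j) : ℂ) ^ p * v j)
      = (starRingEnd ℂ) (v i) * v j * Kk π ξ η p i j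
    unfold Kk
    ring
  rw [← h3]
  exact h2

lemma wv_equivariant (hinv : ∀ g : G, (π g) η = η) (g : G) (x : Option G) :
    wv π ξ η (Equiv.optionCongr (Equiv.mulLeft g) x) = (π g) (wv π ξ η x) := by
  cases x with
  | none => simpa [wv] using (hinv g).symm
  | some a =>
    show wv π ξ η (some (g * a)) = (π g) ((π a) ξ)
    simp only [wv, Option.elim, map_mul]
    rfl

lemma Kk_inv (hinv : ∀ g : G, (π g) η = η) (g : G) :
    ∀ x y, Kk π ξ η p (Equiv.optionCongr (Equiv.mulLeft g) x)
      (Equiv.optionCongr (Equiv.mulLeft g) y) = Kk π ξ η p x y := by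
  intro x y
  unfold Kk
  rw [wv_equivariant π ξ η hinv, wv_equivariant π ξ η hinv,
    LinearIsometryEquiv.inner_map_map]

end Main

section CompletionIso

open UniformSpace

variable {F : Type*} [SeminormedAddCommGroup F] [NormedSpace ℂ F]

/-- Extension of a linear isometric equivalence to the completion. -/
noncomputable def compIso (e : F ≃ₗᵢ[ℂ] F) : Completion F ≃ₗᵢ[ℂ] Completion F where
  toLinearEquiv :=
    { toFun := Completion.map e
      invFun := Completion.map e.symm
      map_add' := fun a b => by
        refine Completion.induction_on₂ a b ?_ fun x y => ?_
        · exact isClosed_eq (Completion.continuous_map.comp continuous_add)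
            (Continuous.add (f := fun x : Completion F × Completion F => Completion.map e x.1)
              (g := fun x : Completion F × Completion F => Completion.map e x.2)
              (Completion.continuous_map.comp continuous_fst)
              (Completion.continuous_map.comp continuous_snd))
        · rw [← Completion.coe_add,
            Completion.map_coe e.isometry.uniformContinuous,
            Completion.map_coe e.isometry.uniformContinuous,
            Completion.map_coe e.isometry.uniformContinuous,
            ← Completion.coe_add, e.map_add]
      map_smul' := fun c a => by
        refine Completion.induction_on a ?_ fun x => ?_
        · exact isClosed_eq (Completion.continuous_map.comp (continuous_const_smul c))
            ((continuous_const_smul c).comp Completion.continuous_map)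
        · rw [← Completion.coe_smul, Completion.map_coe e.isometry.uniformContinuous,
            map_smul, Completion.coe_smul,
            Completion.map_coe e.isometry.uniformContinuous]
          rfl
      left_inv := fun a => by
        refine Completion.induction_on a ?_ fun x => ?_
        · exact isClosed_eq (Completion.continuous_map.comp Completion.continuous_map)
            continuous_id
        · rw [Completion.map_coe e.isometry.uniformContinuous,
            Completion.map_coe e.symm.isometry.uniformContinuous]
          simp
      right_inv := fun a => by
        refine Completion.induction_on a ?_ fun x => ?_
        · exact isClosed_eq (Completion.continuous_map.comp Completion.continuous_map)
            continuous_id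
        · rw [Completion.map_coe e.symm.isometry.uniformContinuous,
            Completion.map_coe e.isometry.uniformContinuous]
          simp }
  norm_map' := fun a => by
    refine Completion.induction_on a ?_ fun x => ?_
    · exact isClosed_eq (continuous_norm.comp Completion.continuous_map) continuous_norm
    · show ‖Completion.map (⇑e) ((x : Completion F))‖ = ‖(x : Completion F)‖
      rw [Completion.map_coe e.isometry.uniformContinuous]
      simp only [Completion.norm_coe]
      exact e.norm_map x

@[simp] lemma compIso_coe (e : F ≃ₗᵢ[ℂ] F) (x : F) :
    compIso e (x : Completion F) = (e x : Completion F) :=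
  Completion.map_coe e.isometry.uniformContinuous x

end CompletionIso

open UniformSpace
theorem opRecurrence_pow_summable (G : Type) [Group G] [Countable G]
    (V : Set G) (p : ℕ) (hp : 0 < p)
    (hyp : ∀ (H : Type) (_ : NormedAddCommGroup H) (_ : InnerProductSpace ℂ H)
      (_ : CompleteSpace H),
      ∀ (π : G →* (H ≃ₗᵢ[ℂ] H)) (ξ : H),
        Summable (fun v : V => ‖(inner ℂ ((π (v : G)) ξ) ξ : ℂ)‖) →
        ∀ η : H, (∀ g : G, (π g) η = η) → (inner ℂ ξ η : ℂ) = 0) :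
    ∀ (H : Type) (_ : NormedAddCommGroup H) (_ : InnerProductSpace ℂ H)
      (_ : CompleteSpace H),
      ∀ (π : G →* (H ≃ₗᵢ[ℂ] H)) (ξ : H),
        Summable (fun v : V => (‖(inner ℂ ((π (v : G)) ξ) ξ : ℂ)‖) ^ p) →
        ∀ η : H, (∀ g : G, (π g) η = η) → (inner ℂ ξ η : ℂ) = 0 := by
  intro H i1 i2 i3 π ξ hsum η hinv
  classical
  letI core : PreInnerProductSpace.Core ℂ (Option G →₀ ℂ) :=
    kCore (Kk π ξ η p) (Kk_symm π ξ η p) (Kk_pos π ξ η p hp)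
  letI semi : SeminormedAddCommGroup (Option G →₀ ℂ) :=
    @InnerProductSpace.Core.toSeminormedAddCommGroup ℂ (Option G →₀ ℂ) _ _ _ core
  letI nsp : NormedSpace ℂ (Option G →₀ ℂ) :=
    @InnerProductSpace.Core.toNormedSpace ℂ (Option G →₀ ℂ) _ _ _ core
  letI ips : InnerProductSpace ℂ (Option G →₀ ℂ) :=
    { nsp with
      toInner := core.toInner
      norm_sq_eq_re_inner := fun x => by
        have h₁ : ‖x‖ ^ 2 = Real.sqrt (RCLike.re (core.inner x x)) ^ 2 := rfl
        rw [h₁, Real.sq_sqrt (core.re_inner_nonneg x)]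
      conj_inner_symm := core.conj_inner_symm
      add_left := core.add_left
      smul_left := core.smul_left }
  have hnorm : ∀ h : Option G →₀ ℂ,
      ‖h‖ = Real.sqrt (RCLike.re (kInner (Kk π ξ η p) h h)) := fun h => rfl
  let TF : G → ((Option G →₀ ℂ) ≃ₗᵢ[ℂ] (Option G →₀ ℂ)) := fun g =>
    { toLinearEquiv := Finsupp.domLCongr (Equiv.optionCongr (Equiv.mulLeft g))
      norm_map' := fun f => by
        show ‖Finsupp.equivMapDomain (Equiv.optionCongr (Equiv.mulLeft g)) f‖ = ‖f‖
        rw [hnorm, hnorm,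
          kInner_equivMapDomain _ _ (Kk_inv π ξ η p hinv g) f f] }
  have TF_apply : ∀ (g : G) (f : Option G →₀ ℂ),
      TF g f = Finsupp.equivMapDomain (Equiv.optionCongr (Equiv.mulLeft g)) f :=
    fun _ _ => rfl
  let TE : G → (Completion (Option G →₀ ℂ) ≃ₗᵢ[ℂ] Completion (Option G →₀ ℂ)) :=
    fun g => compIso (TF g)
  have TE_coe : ∀ (g : G) (f : Option G →₀ ℂ),
      TE g (f : Completion (Option G →₀ ℂ)) = ((TF g f : Option G →₀ ℂ) : Completion _) :=
    fun g f => compIso_coe (TF g) f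
  let Prep : G →* (Completion (Option G →₀ ℂ) ≃ₗᵢ[ℂ] Completion (Option G →₀ ℂ)) :=
    { toFun := TE
      map_one' := by
        refine LinearIsometryEquiv.ext fun a => ?_
        refine Completion.induction_on a
          (isClosed_eq (TE 1).continuous continuous_id) fun f => ?_
        rw [TE_coe, show TF 1 f = f from by
          ext x; simp [TF_apply, Finsupp.equivMapDomain_apply, Equiv.Perm.one_symm, Equiv.Perm.one_apply]]
        rfl
      map_mul' := fun g h => by
        refine LinearIsometryEquiv.ext fun a => ?_
        refine Completion.induction_on a
          (isClosed_eq (TE (g * h)).continuous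
            ((TE g).continuous.comp (TE h).continuous)) fun f => ?_
        have hmul : (TE g * TE h) ((f : Completion (Option G →₀ ℂ)))
            = TE g (TE h (f : Completion (Option G →₀ ℂ))) := rfl
        rw [hmul, TE_coe, TE_coe, TE_coe, show TF (g * h) f = TF g (TF h f) from by
          ext x
          cases x with
          | none => simp [TF_apply, Finsupp.equivMapDomain_apply]; rfl
          | some a => simp [TF_apply, Finsupp.equivMapDomain_apply, Equiv.optionCongr,
              Equiv.mulLeft, mul_assoc]] }
  have hsingle : ∀ x y : Option G,
      (inner ℂ ((Finsupp.single x (1 : ℂ) : Option G →₀ ℂ) : Completion (Option G →₀ ℂ))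
        ((Finsupp.single y (1 : ℂ) : Option G →₀ ℂ) : Completion (Option G →₀ ℂ)) : ℂ)
        = Kk π ξ η p x y := by
    intro x y
    rw [Completion.inner_coe]
    exact kInner_single (Kk π ξ η p) x y
  have hact : ∀ (g : G) (x : Option G),
      Prep g ((Finsupp.single x (1 : ℂ) : Option G →₀ ℂ) : Completion (Option G →₀ ℂ))
        = ((Finsupp.single (Equiv.optionCongr (Equiv.mulLeft g) x) (1 : ℂ) : Option G →₀ ℂ)
            : Completion (Option G →₀ ℂ)) := by
    intro g x
    show TE g _ = _
    rw [TE_coe, show TF g (Finsupp.single x 1)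
      = Finsupp.single (Equiv.optionCongr (Equiv.mulLeft g) x) 1 from
        Finsupp.equivMapDomain_single _ _ _]
  have key := hyp (Completion (Option G →₀ ℂ)) inferInstance inferInstance inferInstance Prep
      ((Finsupp.single (some (1 : G)) (1 : ℂ) : Option G →₀ ℂ) : Completion (Option G →₀ ℂ))
      (by
        refine hsum.congr fun v => ?_
        rw [hact, hsingle]
        show ‖(inner ℂ ((π (v : G)) ξ) ξ : ℂ)‖ ^ p = ‖Kk π ξ η p _ _‖
        rw [← norm_pow]
        congr 1
        show (inner ℂ ((π (v : G)) ξ) ξ : ℂ) ^ p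
          = (inner ℂ (wv π ξ η (some ((v : G) * 1))) (wv π ξ η (some 1)) : ℂ) ^ p
        simp [wv])
      ((Finsupp.single (none : Option G) (1 : ℂ) : Option G →₀ ℂ) : Completion (Option G →₀ ℂ))
      (by
        intro g
        rw [hact g none]
        rfl)
  rw [hsingle (some 1) none] at key
  have hzero : (inner ℂ ξ η : ℂ) ^ p = 0 := by
    have : Kk π ξ η p (some 1) none = (inner ℂ ξ η : ℂ) ^ p := by
      show (inner ℂ (wv π ξ η (some 1)) (wv π ξ η none) : ℂ) ^ p = _
      simp [wv]
    rwa [this] at key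
  exact pow_eq_zero_iff hp.ne' |>.mp hzero
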